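/- Let p > 1 and 0 ≤ α < 1, and let f : [1,∞) → [0,∞) be continuous. Assume there exist constants C₀ > 0, C₁ > 0, C₂ ≥ 0 and C₃ ≥ 0 such that for all real numbers 1 ≤ x₁ < x₂ one has f(x₂) + C₁ ∫_{x₁}^{x₂} x^{−α} f(x) dx ≤ C₀ f(x₁) + C₂ ∫_{x₁}^{x₂} x^{−p} dx + C₃ x₁^{−p}. Then there exists a constant C, depending only on f(1), C₀, C₁, C₂, C₃, p and α, such that f(x) ≤ C x^{−p+α} for all x ≥ 1. -/

import Mathlib

open MeasureTheory

private lemma decay_step_aux (p α : ℝ) (hp : 1 < p) (hα0 : 0 ≤ α) (hα1 : α < 1)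
    (f : ℝ → ℝ) (hfc : ContinuousOn f (Set.Ici 1))
    (hfnn : ∀ x : ℝ, 1 ≤ x → 0 ≤ f x)
    (C₀' C₁ C₂ C₃ : ℝ) (hC₀'1 : 1 ≤ C₀') (hC₁ : 0 < C₁) (hC₂ : 0 ≤ C₂) (hC₃ : 0 ≤ C₃)
    (hineq' : ∀ x₁ x₂ : ℝ, 1 ≤ x₁ → x₁ < x₂ →
      f x₂ + C₁ * (∫ x in x₁..x₂, x ^ (-α) * f x) ≤
        C₀' * f x₁ + C₂ * (∫ x in x₁..x₂, x ^ (-p)) + C₃ * x₁ ^ (-p))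
    (L : ℝ) (hLpos : 0 < L) (x : ℝ) (hx1 : 1 ≤ x) (hLx : L * x ^ α ≤ x) :
    f (x + L * x ^ α) ≤ (C₀' ^ 2 * 2 ^ α / (C₁ * L)) * f x +
      ((C₀' * 2 ^ α / (C₁ * L) + 1) * (C₂ * L + C₃)) * x ^ (α - p) := by
  have hC₀'pos : (0:ℝ) < C₀' := lt_of_lt_of_le one_pos hC₀'1
  have hxpos : (0:ℝ) < x := lt_of_lt_of_le one_pos hx1
  have h2α : (0:ℝ) < (2:ℝ) ^ α := Real.rpow_pos_of_pos two_pos _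
  have hcont_pow : ∀ (r : ℝ), ContinuousOn (fun t : ℝ => t ^ r) (Set.Ici (1:ℝ)) := by
    intro r
    apply continuousOn_of_forall_continuousAt
    intro t ht
    exact Real.continuousAt_rpow_const t r (Or.inl (by
      have : (1:ℝ) ≤ t := ht
      positivity))
  have hsub : ∀ a c : ℝ, 1 ≤ a → a ≤ c → Set.uIcc a c ⊆ Set.Ici (1:ℝ) := by
    intro a c ha hac
    rw [Set.uIcc_of_le hac]
    exact fun t htt => le_trans ha htt.1
  have hIntPow : ∀ (r a c : ℝ), 1 ≤ a → a ≤ c →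
      IntervalIntegrable (fun t : ℝ => t ^ r) volume a c := fun r a c ha hac =>
    ((hcont_pow r).mono (hsub a c ha hac)).intervalIntegrable
  have hIntF : ∀ a c : ℝ, 1 ≤ a → a ≤ c → IntervalIntegrable f volume a c :=
    fun a c ha hac => (hfc.mono (hsub a c ha hac)).intervalIntegrable
  have hIntPF : ∀ a c : ℝ, 1 ≤ a → a ≤ c →
      IntervalIntegrable (fun t : ℝ => t ^ (-α) * f t) volume a c := fun a c ha hac =>
    (((hcont_pow (-α)).mono (hsub a c ha hac)).mul
      (hfc.mono (hsub a c ha hac))).intervalIntegrable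
  set h : ℝ := L * x ^ α with hhdef
  have hxα : (0:ℝ) < x ^ α := Real.rpow_pos_of_pos hxpos _
  have hhpos : 0 < h := by positivity
  set b : ℝ := x + h with hbdef
  have hxb : x < b := by simp only [hbdef]; linarith
  have hb2x : b ≤ 2 * x := by simp only [hbdef]; linarith
  have hbpos : (0:ℝ) < b := by linarith
  have hb1 : (1:ℝ) ≤ b := by linarith
  have hxpnn : (0:ℝ) ≤ x ^ (-p) := Real.rpow_nonneg hxpos.le _
  have hbx : b - x = h := by simp [hbdef]
  -- ∫ t^{-p} over [x,b] ≤ h * x^{-p}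
  have hI1 : (∫ t in x..b, t ^ (-p)) ≤ h * x ^ (-p) := by
    have h5 : (∫ t in x..b, t ^ (-p)) ≤ ∫ _t in x..b, x ^ (-p) := by
      apply intervalIntegral.integral_mono_on hxb.le (hIntPow _ _ _ hx1 hxb.le)
        intervalIntegrable_const
      intro t ht
      exact Real.rpow_le_rpow_of_nonpos hxpos ht.1 (by linarith)
    rw [intervalIntegral.integral_const, smul_eq_mul, hbx] at h5
    exact h5
  -- from the main inequality on [x,b]
  have key : C₁ * (∫ t in x..b, t ^ (-α) * f t) ≤
      C₀' * f x + C₂ * (h * x ^ (-p)) + C₃ * x ^ (-p) := by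
    have h0 := hineq' x b hx1 hxb
    have hfb : 0 ≤ f b := hfnn b hb1
    have h6 : C₂ * (∫ t in x..b, t ^ (-p)) ≤ C₂ * (h * x ^ (-p)) :=
      mul_le_mul_of_nonneg_left hI1 hC₂
    linarith
  -- minimum point
  obtain ⟨ξ, hξmem, hξmin⟩ := (isCompact_Icc : IsCompact (Set.Icc x b)).exists_isMinOn
    ⟨x, le_refl x, hxb.le⟩ (hfc.mono (fun t ht => le_trans hx1 ht.1))
  have hξ1 : (1:ℝ) ≤ ξ := le_trans hx1 hξmem.1
  have hfξnn : 0 ≤ f ξ := hfnn ξ hξ1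
  have hfξ_int : h * f ξ ≤ ∫ t in x..b, f t := by
    have h5 : (∫ _t in x..b, f ξ) ≤ ∫ t in x..b, f t := by
      apply intervalIntegral.integral_mono_on hxb.le intervalIntegrable_const
        (hIntF _ _ hx1 hxb.le)
      intro t ht
      exact isMinOn_iff.mp hξmin t ht
    rw [intervalIntegral.integral_const, smul_eq_mul, hbx] at h5
    exact h5
  have hlow : b ^ (-α) * (∫ t in x..b, f t) ≤ ∫ t in x..b, t ^ (-α) * f t := by
    rw [← intervalIntegral.integral_const_mul]
    apply intervalIntegral.integral_mono_on hxb.le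
      ((hIntF _ _ hx1 hxb.le).const_mul _) (hIntPF _ _ hx1 hxb.le)
    intro t ht
    have htpos : (0:ℝ) < t := lt_of_lt_of_le hxpos ht.1
    exact mul_le_mul_of_nonneg_right
      (Real.rpow_le_rpow_of_nonpos htpos ht.2 (by linarith))
      (hfnn t (le_trans hx1 ht.1))
  have hba : (0:ℝ) < b ^ α := Real.rpow_pos_of_pos hbpos _
  have hbinv : b ^ (-α) = (b ^ α)⁻¹ := by rw [Real.rpow_neg hbpos.le]
  -- bound on f ξ
  have hfξ : f ξ ≤ b ^ α / (C₁ * h) * (C₀' * f x + C₂ * (h * x ^ (-p)) + C₃ * x ^ (-p)) := by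
    have hchain : C₁ * ((b ^ α)⁻¹ * (h * f ξ)) ≤
        C₀' * f x + C₂ * (h * x ^ (-p)) + C₃ * x ^ (-p) := by
      have h6 : (b ^ α)⁻¹ * (h * f ξ) ≤ ∫ t in x..b, t ^ (-α) * f t := by
        calc (b ^ α)⁻¹ * (h * f ξ) ≤ (b ^ α)⁻¹ * ∫ t in x..b, f t :=
              mul_le_mul_of_nonneg_left hfξ_int (by positivity)
          _ ≤ ∫ t in x..b, t ^ (-α) * f t := by rw [← hbinv]; exact hlow
      calc C₁ * ((b ^ α)⁻¹ * (h * f ξ)) ≤ C₁ * ∫ t in x..b, t ^ (-α) * f t :=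
            mul_le_mul_of_nonneg_left h6 hC₁.le
        _ ≤ _ := key
    rw [div_mul_eq_mul_div, le_div_iff₀ (by positivity : (0:ℝ) < C₁ * h)]
    have heq : b ^ α * (C₁ * ((b ^ α)⁻¹ * (h * f ξ))) = f ξ * (C₁ * h) := by
      field_simp
    calc f ξ * (C₁ * h) = b ^ α * (C₁ * ((b ^ α)⁻¹ * (h * f ξ))) := heq.symm
      _ ≤ b ^ α * (C₀' * f x + C₂ * (h * x ^ (-p)) + C₃ * x ^ (-p)) :=
          mul_le_mul_of_nonneg_left hchain hba.le
  -- bound f b by f ξ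
  have hfb2 : f b ≤ C₀' * f ξ + C₂ * (h * x ^ (-p)) + C₃ * x ^ (-p) := by
    have h11 : (0:ℝ) ≤ C₂ * (h * x ^ (-p)) := by positivity
    have h12 : (0:ℝ) ≤ C₃ * x ^ (-p) := by positivity
    rcases eq_or_lt_of_le hξmem.2 with hcase | hcase
    · have h10 : f ξ ≤ C₀' * f ξ := le_mul_of_one_le_left hfξnn hC₀'1
      rw [← hcase]
      linarith
    · have h7 := hineq' ξ b hξ1 hcase
      have h8 : 0 ≤ ∫ t in ξ..b, t ^ (-α) * f t := by
        apply intervalIntegral.integral_nonneg hcase.le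
        intro t ht
        have ht1 : (1:ℝ) ≤ t := le_trans hξ1 ht.1
        exact mul_nonneg (Real.rpow_nonneg (by linarith) _) (hfnn t ht1)
      have hI1' : (∫ t in ξ..b, t ^ (-p)) ≤ h * x ^ (-p) := by
        have h5 : (∫ t in ξ..b, t ^ (-p)) ≤ ∫ _t in ξ..b, x ^ (-p) := by
          apply intervalIntegral.integral_mono_on hcase.le (hIntPow _ _ _ hξ1 hcase.le)
            intervalIntegrable_const
          intro t ht
          exact Real.rpow_le_rpow_of_nonpos hxpos (le_trans hξmem.1 ht.1) (by linarith)
        rw [intervalIntegral.integral_const, smul_eq_mul] at h5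
        have h9 : (b - ξ) * x ^ (-p) ≤ h * x ^ (-p) := by
          apply mul_le_mul_of_nonneg_right _ hxpnn
          have := hξmem.1
          linarith [hbx]
        linarith
      have hξp : ξ ^ (-p) ≤ x ^ (-p) :=
        Real.rpow_le_rpow_of_nonpos hxpos hξmem.1 (by linarith)
      have h13 := mul_le_mul_of_nonneg_left hI1' hC₂
      have h14 := mul_le_mul_of_nonneg_left hξp hC₃
      have h15 : 0 ≤ C₁ * ∫ t in ξ..b, t ^ (-α) * f t := mul_nonneg hC₁.le h8
      linarith
  -- final combination
  have hfrac : b ^ α / (C₁ * h) ≤ 2 ^ α / (C₁ * L) := by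
    have hba2 : b ^ α ≤ 2 ^ α * x ^ α := by
      rw [← Real.mul_rpow (by norm_num : (0:ℝ) ≤ 2) hxpos.le]
      exact Real.rpow_le_rpow hbpos.le hb2x hα0
    have heq2 : (2:ℝ) ^ α * x ^ α / (C₁ * h) = 2 ^ α / (C₁ * L) := by
      rw [hhdef]
      field_simp
    calc b ^ α / (C₁ * h) ≤ 2 ^ α * x ^ α / (C₁ * h) :=
          div_le_div_of_nonneg_right hba2 (by positivity)
      _ = 2 ^ α / (C₁ * L) := heq2
  have hxap : x ^ α * x ^ (-p) = x ^ (α - p) := by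
    rw [← Real.rpow_add hxpos]; ring_nf
  have hxapnn : (0:ℝ) ≤ x ^ (α - p) := Real.rpow_nonneg hxpos.le _
  have hxp_le : x ^ (-p) ≤ x ^ (α - p) :=
    Real.rpow_le_rpow_of_exponent_le hx1 (by linarith)
  have e1 : C₂ * (h * x ^ (-p)) + C₃ * x ^ (-p) ≤ (C₂ * L + C₃) * x ^ (α - p) := by
    have e1a : h * x ^ (-p) = L * x ^ (α - p) := by
      rw [hhdef, mul_assoc, hxap]
    rw [e1a]
    have := mul_le_mul_of_nonneg_left hxp_le hC₃
    linarith
  have hRnn : 0 ≤ C₀' * f x + C₂ * (h * x ^ (-p)) + C₃ * x ^ (-p) := by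
    have := hfnn x hx1
    have h11 : (0:ℝ) ≤ C₂ * (h * x ^ (-p)) := by positivity
    have h12 : (0:ℝ) ≤ C₃ * x ^ (-p) := by positivity
    nlinarith
  have hfb3 : f b ≤ C₀' * (b ^ α / (C₁ * h) *
      (C₀' * f x + C₂ * (h * x ^ (-p)) + C₃ * x ^ (-p))) +
      C₂ * (h * x ^ (-p)) + C₃ * x ^ (-p) := by
    have := mul_le_mul_of_nonneg_left hfξ hC₀'pos.le
    linarith
  have m1 : b ^ α / (C₁ * h) * (C₀' * f x + C₂ * (h * x ^ (-p)) + C₃ * x ^ (-p)) ≤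
      2 ^ α / (C₁ * L) * (C₀' * f x + C₂ * (h * x ^ (-p)) + C₃ * x ^ (-p)) :=
    mul_le_mul_of_nonneg_right hfrac hRnn
  have c1 := mul_le_mul_of_nonneg_left m1 hC₀'pos.le
  have c3 : (C₀' * 2 ^ α / (C₁ * L)) * (C₂ * (h * x ^ (-p)) + C₃ * x ^ (-p)) ≤
      (C₀' * 2 ^ α / (C₁ * L)) * ((C₂ * L + C₃) * x ^ (α - p)) :=
    mul_le_mul_of_nonneg_left e1 (by positivity)
  have hfbgoal : f b ≤ (C₀' ^ 2 * 2 ^ α / (C₁ * L)) * f x +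
      ((C₀' * 2 ^ α / (C₁ * L) + 1) * (C₂ * L + C₃)) * x ^ (α - p) := by
    have c2 : C₀' * (2 ^ α / (C₁ * L) *
        (C₀' * f x + C₂ * (h * x ^ (-p)) + C₃ * x ^ (-p))) =
        (C₀' ^ 2 * 2 ^ α / (C₁ * L)) * f x +
        (C₀' * 2 ^ α / (C₁ * L)) * (C₂ * (h * x ^ (-p)) + C₃ * x ^ (-p)) := by ring
    rw [c2] at c1
    have c4 : ((C₀' * 2 ^ α / (C₁ * L) + 1) * (C₂ * L + C₃)) * x ^ (α - p) =
        (C₀' * 2 ^ α / (C₁ * L)) * ((C₂ * L + C₃) * x ^ (α - p)) +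
        (C₂ * L + C₃) * x ^ (α - p) := by ring
    rw [c4]
    linarith
  exact hfbgoal

/-- Decay lemma: a continuous nonnegative function on `[1, ∞)` satisfying the
two-point integral inequality decays like `x ^ (-p + α)`. -/
theorem decay_lemma (p α : ℝ) (hp : 1 < p) (hα0 : 0 ≤ α) (hα1 : α < 1)
    (f : ℝ → ℝ) (hfc : ContinuousOn f (Set.Ici 1))
    (hfnn : ∀ x : ℝ, 1 ≤ x → 0 ≤ f x)
    (C₀ C₁ C₂ C₃ : ℝ) (hC₀ : 0 < C₀) (hC₁ : 0 < C₁) (hC₂ : 0 ≤ C₂) (hC₃ : 0 ≤ C₃)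
    (hineq : ∀ x₁ x₂ : ℝ, 1 ≤ x₁ → x₁ < x₂ →
      f x₂ + C₁ * (∫ x in x₁..x₂, x ^ (-α) * f x) ≤
        C₀ * f x₁ + C₂ * (∫ x in x₁..x₂, x ^ (-p)) + C₃ * x₁ ^ (-p)) :
    ∃ C : ℝ, 0 < C ∧ ∀ x : ℝ, 1 ≤ x → f x ≤ C * x ^ (-p + α) := by
  set C₀' : ℝ := max C₀ 1 with hC₀'def
  have hC₀'1 : (1:ℝ) ≤ C₀' := le_max_right _ _
  have hC₀'pos : (0:ℝ) < C₀' := lt_of_lt_of_le one_pos hC₀'1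
  have hineq' : ∀ x₁ x₂ : ℝ, 1 ≤ x₁ → x₁ < x₂ →
      f x₂ + C₁ * (∫ x in x₁..x₂, x ^ (-α) * f x) ≤
        C₀' * f x₁ + C₂ * (∫ x in x₁..x₂, x ^ (-p)) + C₃ * x₁ ^ (-p) := by
    intro x₁ x₂ h1 h2
    have h3 := hineq x₁ x₂ h1 h2
    have h4 : C₀ * f x₁ ≤ C₀' * f x₁ :=
      mul_le_mul_of_nonneg_right (le_max_left _ _) (hfnn x₁ h1)
    linarith
  have h2ap : (0:ℝ) < (2:ℝ) ^ (α - p) := Real.rpow_pos_of_pos two_pos _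
  have h2pa : (0:ℝ) < (2:ℝ) ^ (p - α) := Real.rpow_pos_of_pos two_pos _
  have h2cancel : (2:ℝ) ^ (α - p) * (2:ℝ) ^ (p - α) = 1 := by
    rw [← Real.rpow_add two_pos]
    norm_num
  set θ : ℝ := (2:ℝ) ^ (α - p) / 2 with hθdef
  have hθpos : 0 < θ := by positivity
  have h2α : (0:ℝ) < (2:ℝ) ^ α := Real.rpow_pos_of_pos two_pos _
  set L : ℝ := C₀' ^ 2 * 2 ^ α / (C₁ * θ) with hLdef
  have hLpos : 0 < L := by positivity
  have hLθ : C₀' ^ 2 * (2:ℝ) ^ α / (C₁ * L) = θ := by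
    rw [hLdef]
    field_simp
  set K : ℝ := (C₀' * 2 ^ α / (C₁ * L) + 1) * (C₂ * L + C₃) with hKdef
  have hKnn : 0 ≤ K := by positivity
  set X₀ : ℝ := max 1 (L ^ (1/(1-α))) with hX₀def
  have hX₀1 : (1:ℝ) ≤ X₀ := le_max_left _ _
  have hX₀pos : (0:ℝ) < X₀ := lt_of_lt_of_le one_pos hX₀1
  have hLX : ∀ x : ℝ, X₀ ≤ x → L * x ^ α ≤ x := by
    intro x hx
    have hx1 : (1:ℝ) ≤ x := le_trans hX₀1 hx
    have hxpos : (0:ℝ) < x := lt_of_lt_of_le one_pos hx1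
    have h1 : L ^ (1/(1-α)) ≤ x := le_trans (le_max_right _ _) hx
    have h2 : L ≤ x ^ (1-α) := by
      have h3 := Real.rpow_le_rpow (Real.rpow_nonneg hLpos.le _) h1
        (by linarith : (0:ℝ) ≤ 1 - α)
      rwa [← Real.rpow_mul hLpos.le, one_div,
        inv_mul_cancel₀ (by linarith : (1:ℝ) - α ≠ 0), Real.rpow_one] at h3
    calc L * x ^ α ≤ x ^ (1-α) * x ^ α :=
          mul_le_mul_of_nonneg_right h2 (Real.rpow_nonneg hxpos.le _)
      _ = x := by rw [← Real.rpow_add hxpos]; norm_num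
  -- the one-step estimate
  have hstep : ∀ x : ℝ, X₀ ≤ x → f (x + L * x ^ α) ≤ θ * f x + K * x ^ (α - p) := by
    intro x hx
    have hx1 : (1:ℝ) ≤ x := le_trans hX₀1 hx
    have := decay_step_aux p α hp hα0 hα1 f hfc hfnn C₀' C₁ C₂ C₃ hC₀'1 hC₁ hC₂ hC₃
      hineq' L hLpos x hx1 (hLX x hx)
    rw [hLθ] at this
    exact this
  set X₁ : ℝ := X₀ + L * X₀ ^ α with hX₁def
  have hX₀α : (0:ℝ) < X₀ ^ α := Real.rpow_pos_of_pos hX₀pos _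
  have hX₀X₁ : X₀ ≤ X₁ := by rw [hX₁def]; nlinarith
  have hX₁pos : (0:ℝ) < X₁ := lt_of_lt_of_le hX₀pos hX₀X₁
  have hX₁1 : (1:ℝ) ≤ X₁ := le_trans hX₀1 hX₀X₁
  -- bound on [X₀, X₁]
  obtain ⟨B, hB⟩ := (isCompact_Icc : IsCompact (Set.Icc X₀ X₁)).exists_bound_of_continuousOn
    (hfc.mono (fun t ht => le_trans hX₀1 ht.1))
  set M : ℝ := max ((max B 0) * X₁ ^ (p - α)) (K / θ) with hMdef
  have hMnn : 0 ≤ M := le_trans (by positivity) (le_max_right _ _)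
  have hKθM : K ≤ θ * M := by
    have hdiv : K / θ ≤ M := by rw [hMdef]; exact le_max_right _ _
    calc K = θ * (K / θ) := by field_simp
      _ ≤ θ * M := mul_le_mul_of_nonneg_left hdiv hθpos.le
  -- continuity of y ↦ y + L * y ^ α
  have hgcont : ContinuousOn (fun y : ℝ => y + L * y ^ α) (Set.Ici (1:ℝ)) := by
    apply ContinuousOn.add continuousOn_id
    apply ContinuousOn.mul continuousOn_const
    apply continuousOn_of_forall_continuousAt
    intro t ht
    exact Real.continuousAt_rpow_const t α (Or.inl (by
      have : (1:ℝ) ≤ t := ht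
      positivity))
  -- main induction
  have main : ∀ n : ℕ, ∀ x : ℝ, X₀ ≤ x → x ≤ X₁ + n * L → f x ≤ M * x ^ (α - p) := by
    intro n
    induction n with
    | zero =>
      intro x hx hx'
      simp only [Nat.cast_zero, zero_mul, add_zero] at hx'
      have hx1 : (1:ℝ) ≤ x := le_trans hX₀1 hx
      have hxpos : (0:ℝ) < x := lt_of_lt_of_le one_pos hx1
      have hfB : f x ≤ max B 0 := by
        have := hB x ⟨hx, hx'⟩
        rw [Real.norm_eq_abs] at this
        exact le_trans (le_trans (le_abs_self _) this) (le_max_left _ _)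
      have hxX₁ : X₁ ^ (α - p) ≤ x ^ (α - p) :=
        Real.rpow_le_rpow_of_nonpos hxpos hx' (by linarith)
      have hXcancel : X₁ ^ (p - α) * X₁ ^ (α - p) = 1 := by
        rw [← Real.rpow_add hX₁pos]
        norm_num
      calc f x ≤ max B 0 := hfB
        _ = (max B 0 * X₁ ^ (p - α)) * X₁ ^ (α - p) := by
            rw [mul_assoc, hXcancel, mul_one]
        _ ≤ M * x ^ (α - p) := by
            apply mul_le_mul (le_max_left _ _) hxX₁
              (Real.rpow_nonneg hX₁pos.le _) hMnn
    | succ n ih =>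
      intro x hx hx'
      by_cases hc : x ≤ X₁ + n * L
      · exact ih x hx hc
      push_neg at hc
      have hx1 : (1:ℝ) ≤ x := le_trans hX₀1 hx
      have hxpos : (0:ℝ) < x := lt_of_lt_of_le one_pos hx1
      have hnL : (0:ℝ) ≤ n * L := by positivity
      have hX₁x : X₁ ≤ x := by linarith
      have hgx : x ≤ x + L * x ^ α := by nlinarith [Real.rpow_pos_of_pos hxpos α]
      have hX₀x : X₀ ≤ x := hx
      obtain ⟨y, hymem, hgy⟩ := intermediate_value_Icc hX₀x
        (hgcont.mono (fun t ht => le_trans hX₀1 ht.1)) ⟨by rw [← hX₁def]; exact hX₁x, hgx⟩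
      have hgy' : y + L * y ^ α = x := hgy
      have hy1 : (1:ℝ) ≤ y := le_trans hX₀1 hymem.1
      have hypos : (0:ℝ) < y := lt_of_lt_of_le one_pos hy1
      have hyα : (1:ℝ) ≤ y ^ α := by
        have := Real.rpow_le_rpow_of_exponent_le hy1 hα0
        rwa [Real.rpow_zero] at this
      have hyL : y + L ≤ x := by
        have h20 : L * 1 ≤ L * y ^ α := mul_le_mul_of_nonneg_left hyα hLpos.le
        linarith [hgy']
      have hyub : y ≤ X₁ + n * L := by
        have : x ≤ X₁ + (n + 1 : ℕ) * L := hx'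
        push_cast at this
        linarith
      have hfy := ih y hymem.1 hyub
      have hstepy := hstep y hymem.1
      have hx2y : x ≤ 2 * y := by
        have := hLX y hymem.1
        linarith [hgy']
      have hyap : y ^ (α - p) ≤ 2 ^ (p - α) * x ^ (α - p) := by
        have h21 : (2 * y) ^ (α - p) ≤ x ^ (α - p) :=
          Real.rpow_le_rpow_of_nonpos hxpos hx2y (by linarith)
        have h22 : ((2:ℝ) * y) ^ (α - p) = 2 ^ (α - p) * y ^ (α - p) :=
          Real.mul_rpow (by norm_num) hypos.le
        calc y ^ (α - p) = 2 ^ (p - α) * (2 ^ (α - p) * y ^ (α - p)) := by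
              rw [← mul_assoc]
              rw [show (2:ℝ) ^ (p - α) * 2 ^ (α - p) = 1 by rw [mul_comm]; exact h2cancel]
              rw [one_mul]
          _ = 2 ^ (p - α) * (2 * y) ^ (α - p) := by rw [h22]
          _ ≤ 2 ^ (p - α) * x ^ (α - p) := mul_le_mul_of_nonneg_left h21 h2pa.le
      have hyapnn : (0:ℝ) ≤ y ^ (α - p) := Real.rpow_nonneg hypos.le _
      calc f x = f (y + L * y ^ α) := by rw [hgy']
        _ ≤ θ * f y + K * y ^ (α - p) := hstepy
        _ ≤ θ * (M * y ^ (α - p)) + (θ * M) * y ^ (α - p) :=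
            add_le_add (mul_le_mul_of_nonneg_left hfy hθpos.le)
              (mul_le_mul_of_nonneg_right hKθM hyapnn)
        _ = (2 * θ) * M * y ^ (α - p) := by ring
        _ = 2 ^ (α - p) * M * y ^ (α - p) := by rw [hθdef]; ring
        _ ≤ 2 ^ (α - p) * M * (2 ^ (p - α) * x ^ (α - p)) := by
            apply mul_le_mul_of_nonneg_left hyap (by positivity)
        _ = (2 ^ (α - p) * 2 ^ (p - α)) * M * x ^ (α - p) := by ring
        _ = M * x ^ (α - p) := by rw [h2cancel, one_mul]
  -- bound on [1, X₀]
  obtain ⟨B', hB'⟩ := (isCompact_Icc : IsCompact (Set.Icc (1:ℝ) X₀)).exists_bound_of_continuousOn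
    (hfc.mono (fun t ht => ht.1))
  set C : ℝ := max M ((max B' 0) * X₀ ^ (p - α)) + 1 with hCdef
  have hCge : max M ((max B' 0) * X₀ ^ (p - α)) ≥ 0 :=
    le_trans hMnn (le_max_left _ _)
  refine ⟨C, by rw [hCdef]; linarith, ?_⟩
  intro x hx1
  have hxpos : (0:ℝ) < x := lt_of_lt_of_le one_pos hx1
  have hxapnn : (0:ℝ) ≤ x ^ (α - p) := Real.rpow_nonneg hxpos.le _
  rw [show -p + α = α - p by ring]
  rcases le_or_gt x X₀ with hcase | hcase
  · have hfB' : f x ≤ max B' 0 := by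
      have := hB' x ⟨hx1, hcase⟩
      rw [Real.norm_eq_abs] at this
      exact le_trans (le_trans (le_abs_self _) this) (le_max_left _ _)
    have hxX₀ : X₀ ^ (α - p) ≤ x ^ (α - p) :=
      Real.rpow_le_rpow_of_nonpos hxpos hcase (by linarith)
    have hXcancel : X₀ ^ (p - α) * X₀ ^ (α - p) = 1 := by
      rw [← Real.rpow_add hX₀pos]
      norm_num
    calc f x ≤ max B' 0 := hfB'
      _ = (max B' 0 * X₀ ^ (p - α)) * X₀ ^ (α - p) := by
          rw [mul_assoc, hXcancel, mul_one]
      _ ≤ (max B' 0 * X₀ ^ (p - α)) * x ^ (α - p) :=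
          mul_le_mul_of_nonneg_left hxX₀ (by positivity)
      _ ≤ C * x ^ (α - p) := by
          apply mul_le_mul_of_nonneg_right _ hxapnn
          rw [hCdef]
          have := le_max_right M ((max B' 0) * X₀ ^ (p - α))
          linarith
  · obtain ⟨n, hn⟩ := exists_nat_ge ((x - X₁) / L)
    have hxn : x ≤ X₁ + n * L := by
      rw [div_le_iff₀ hLpos] at hn
      linarith
    have := main n x hcase.le hxn
    calc f x ≤ M * x ^ (α - p) := this
      _ ≤ C * x ^ (α - p) := by
          apply mul_le_mul_of_nonneg_right _ hxapnn
          rw [hCdef]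
          have := le_max_left M ((max B' 0) * X₀ ^ (p - α))
          linarith
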